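/- Let S₁, S₂, S₃, S₄ be axis-aligned squares in ℝ × ℝ whose interiors are pairwise disjoint, such that Sᵢ ∩ S_{i+1} is an infinite set for each i (indices modulo 4), while S₁ ∩ S₃ = ∅ and S₂ ∩ S₄ = ∅. Then every bounded connected component of (ℝ × ℝ) \ (S₁ ∪ S₂ ∪ S₃ ∪ S₄) is the interior of an axis-aligned rectangle. -/

import Mathlib

open Set

structure AxSquare where
  x : ℝ
  y : ℝ
  side : ℝ
  side_pos : 0 < side

namespace AxSquare
def left (S : AxSquare) : ℝ := S.x
def right (S : AxSquare) : ℝ := S.x + S.side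
def bottom (S : AxSquare) : ℝ := S.y
def top (S : AxSquare) : ℝ := S.y + S.side
/-- The square as a subset of the plane. -/
def toSet (S : AxSquare) : Set (ℝ × ℝ) :=
  Set.Icc S.x (S.x + S.side) ×ˢ Set.Icc S.y (S.y + S.side)
end AxSquare

/-- A proper square-contact representation of `G`, restricted to the vertex set `A`. -/
def IsSCROn {V : Type} (G : SimpleGraph V) (A : Set V) (Sq : V → AxSquare) : Prop :=
  (∀ u ∈ A, ∀ v ∈ A, u ≠ v → interior (Sq u).toSet ∩ interior (Sq v).toSet = ∅) ∧
  (∀ u ∈ A, ∀ v ∈ A, G.Adj u v → ((Sq u).toSet ∩ (Sq v).toSet).Infinite) ∧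
  (∀ u ∈ A, ∀ v ∈ A, u ≠ v → ¬ G.Adj u v → (Sq u).toSet ∩ (Sq v).toSet = ∅)

/-- `G` admits a proper square-contact representation. -/
def HasSCR {V : Type} (G : SimpleGraph V) : Prop :=
  ∃ Sq : V → AxSquare, IsSCROn G Set.univ Sq

/-! ### Auxiliary lemmas -/

lemma AxSquare.mem_toSet_iff (T : AxSquare) (q : ℝ × ℝ) :
    q ∈ T.toSet ↔ (T.x ≤ q.1 ∧ q.1 ≤ T.x + T.side) ∧ (T.y ≤ q.2 ∧ q.2 ≤ T.y + T.side) :=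
  Iff.rfl

/-- Cyclic adjacency on `Fin 4`. -/
abbrev Adj4 (i j : Fin 4) : Prop := j = i + 1 ∨ i = j + 1

lemma fin4_lemma : ∀ u d l r : Fin 4, u ≠ d → l ≠ r → u ≠ l → u ≠ r → d ≠ l → d ≠ r →
    ¬ Adj4 u d →
    (Adj4 u l ∧ Adj4 u r ∧ Adj4 d l ∧ Adj4 d r ∧ ∀ i : Fin 4, i = u ∨ i = d ∨ i = l ∨ i = r) := by
  decide

lemma not_bounded_ray_up (x0 t0 : ℝ) :
    ¬ Bornology.IsBounded ((fun t => ((x0, t) : ℝ × ℝ)) '' Ici t0) := by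
  intro h
  obtain ⟨C, hC⟩ := isBounded_iff_forall_norm_le.mp h
  have h1 := hC (x0, max t0 (C + 1)) ⟨max t0 (C + 1), mem_Ici.mpr (le_max_left _ _), rfl⟩
  have h2 : |max t0 (C + 1)| ≤ ‖((x0, max t0 (C + 1)) : ℝ × ℝ)‖ := by
    simpa [Real.norm_eq_abs] using norm_snd_le ((x0, max t0 (C + 1)) : ℝ × ℝ)
  have h3 : C + 1 ≤ max t0 (C + 1) := le_max_right _ _
  have h4 := le_abs_self (max t0 (C + 1))
  linarith

lemma not_bounded_ray_down (x0 t0 : ℝ) :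
    ¬ Bornology.IsBounded ((fun t => ((x0, t) : ℝ × ℝ)) '' Iic t0) := by
  intro h
  obtain ⟨C, hC⟩ := isBounded_iff_forall_norm_le.mp h
  have h1 := hC (x0, min t0 (-(C + 1))) ⟨min t0 (-(C + 1)), mem_Iic.mpr (min_le_left _ _), rfl⟩
  have h2 : |min t0 (-(C + 1))| ≤ ‖((x0, min t0 (-(C + 1))) : ℝ × ℝ)‖ := by
    simpa [Real.norm_eq_abs] using norm_snd_le ((x0, min t0 (-(C + 1))) : ℝ × ℝ)
  have h3 : min t0 (-(C + 1)) ≤ -(C + 1) := min_le_right _ _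
  have h4 := neg_le_abs (min t0 (-(C + 1)))
  linarith

lemma not_bounded_ray_right (y0 t0 : ℝ) :
    ¬ Bornology.IsBounded ((fun t => ((t, y0) : ℝ × ℝ)) '' Ici t0) := by
  intro h
  obtain ⟨C, hC⟩ := isBounded_iff_forall_norm_le.mp h
  have h1 := hC (max t0 (C + 1), y0) ⟨max t0 (C + 1), mem_Ici.mpr (le_max_left _ _), rfl⟩
  have h2 : |max t0 (C + 1)| ≤ ‖((max t0 (C + 1), y0) : ℝ × ℝ)‖ := by
    simpa [Real.norm_eq_abs] using norm_fst_le ((max t0 (C + 1), y0) : ℝ × ℝ)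
  have h3 : C + 1 ≤ max t0 (C + 1) := le_max_right _ _
  have h4 := le_abs_self (max t0 (C + 1))
  linarith

lemma not_bounded_ray_left (y0 t0 : ℝ) :
    ¬ Bornology.IsBounded ((fun t => ((t, y0) : ℝ × ℝ)) '' Iic t0) := by
  intro h
  obtain ⟨C, hC⟩ := isBounded_iff_forall_norm_le.mp h
  have h1 := hC (min t0 (-(C + 1)), y0) ⟨min t0 (-(C + 1)), mem_Iic.mpr (min_le_left _ _), rfl⟩
  have h2 : |min t0 (-(C + 1))| ≤ ‖((min t0 (-(C + 1)), y0) : ℝ × ℝ)‖ := by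
    simpa [Real.norm_eq_abs] using norm_fst_le ((min t0 (-(C + 1)), y0) : ℝ × ℝ)
  have h3 : min t0 (-(C + 1)) ≤ -(C + 1) := min_le_right _ _
  have h4 := neg_le_abs (min t0 (-(C + 1)))
  linarith

/-- if four axis-aligned squares have pairwise disjoint interiors,
consecutive ones (cyclically) intersect in infinite sets, and opposite ones are
disjoint, then every bounded connected component of the complement of their union is
the interior of an axis-aligned rectangle (an open axis-aligned rectangle). -/
theorem bounded_component_of_four_squares_is_rectangle (S : Fin 4 → AxSquare)
    (hdisj : ∀ i j : Fin 4, i ≠ j →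
      interior (S i).toSet ∩ interior (S j).toSet = ∅)
    (hadj : ∀ i : Fin 4, ((S i).toSet ∩ (S (i + 1)).toSet).Infinite)
    (h02 : (S 0).toSet ∩ (S 2).toSet = ∅)
    (h13 : (S 1).toSet ∩ (S 3).toSet = ∅) :
    ∀ p ∈ ((S 0).toSet ∪ (S 1).toSet ∪ (S 2).toSet ∪ (S 3).toSet)ᶜ,
      Bornology.IsBounded
        (connectedComponentIn ((S 0).toSet ∪ (S 1).toSet ∪ (S 2).toSet ∪ (S 3).toSet)ᶜ p) →
      ∃ a b c d : ℝ, a < b ∧ c < d ∧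
        connectedComponentIn ((S 0).toSet ∪ (S 1).toSet ∪ (S 2).toSet ∪ (S 3).toSet)ᶜ p =
          Set.Ioo a b ×ˢ Set.Ioo c d := by
  intro p hp hbd
  set K : Set (ℝ × ℝ) := (S 0).toSet ∪ (S 1).toSet ∪ (S 2).toSet ∪ (S 3).toSet with hKdef
  have hKmem : ∀ q : ℝ × ℝ, q ∈ K ↔ ∃ i : Fin 4, q ∈ (S i).toSet := by
    intro q
    constructor
    · rintro (((h | h) | h) | h)
      exacts [⟨0, h⟩, ⟨1, h⟩, ⟨2, h⟩, ⟨3, h⟩]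
    · rintro ⟨i, h⟩
      fin_cases i
      · exact Or.inl (Or.inl (Or.inl h))
      · exact Or.inl (Or.inl (Or.inr h))
      · exact Or.inl (Or.inr h)
      · exact Or.inr h
  have hpK : p ∉ K := hp
  -- nonempty intersections for cyclically adjacent squares
  have hadj_ne : ∀ i j : Fin 4, Adj4 i j → ((S i).toSet ∩ (S j).toSet).Nonempty := by
    intro i j hij
    rcases hij with rfl | rfl
    · exact (hadj i).nonempty
    · rw [Set.inter_comm]; exact (hadj j).nonempty
  -- the four blockers
  have hup : ∃ i : Fin 4, ((S i).x ≤ p.1 ∧ p.1 ≤ (S i).x + (S i).side) ∧ p.2 < (S i).y := by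
    by_contra hcon
    push_neg at hcon
    refine not_bounded_ray_up p.1 p.2 (hbd.subset ?_)
    refine IsPreconnected.subset_connectedComponentIn ?_ ⟨p.2, self_mem_Ici, Prod.mk.eta⟩ ?_
    · exact isPreconnected_Ici.image _ (Continuous.continuousOn (by continuity))
    · rintro q ⟨t, ht, rfl⟩ hqK
      obtain ⟨i, hi⟩ := (hKmem _).mp hqK
      rw [AxSquare.mem_toSet_iff] at hi
      obtain ⟨⟨hx1, hx2⟩, hy1, hy2⟩ := hi
      exact hpK ((hKmem p).mpr ⟨i, (AxSquare.mem_toSet_iff _ _).mpr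
        ⟨⟨hx1, hx2⟩, hcon i ⟨hx1, hx2⟩, le_trans ht hy2⟩⟩)
  have hdown : ∃ i : Fin 4, ((S i).x ≤ p.1 ∧ p.1 ≤ (S i).x + (S i).side) ∧
      (S i).y + (S i).side < p.2 := by
    by_contra hcon
    push_neg at hcon
    refine not_bounded_ray_down p.1 p.2 (hbd.subset ?_)
    refine IsPreconnected.subset_connectedComponentIn ?_ ⟨p.2, self_mem_Iic, Prod.mk.eta⟩ ?_
    · exact isPreconnected_Iic.image _ (Continuous.continuousOn (by continuity))
    · rintro q ⟨t, ht, rfl⟩ hqK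
      obtain ⟨i, hi⟩ := (hKmem _).mp hqK
      rw [AxSquare.mem_toSet_iff] at hi
      obtain ⟨⟨hx1, hx2⟩, hy1, hy2⟩ := hi
      exact hpK ((hKmem p).mpr ⟨i, (AxSquare.mem_toSet_iff _ _).mpr
        ⟨⟨hx1, hx2⟩, le_trans hy1 ht, hcon i ⟨hx1, hx2⟩⟩⟩)
  have hright : ∃ i : Fin 4, ((S i).y ≤ p.2 ∧ p.2 ≤ (S i).y + (S i).side) ∧ p.1 < (S i).x := by
    by_contra hcon
    push_neg at hcon
    refine not_bounded_ray_right p.2 p.1 (hbd.subset ?_)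
    refine IsPreconnected.subset_connectedComponentIn ?_ ⟨p.1, self_mem_Ici, Prod.mk.eta⟩ ?_
    · exact isPreconnected_Ici.image _ (Continuous.continuousOn (by continuity))
    · rintro q ⟨t, ht, rfl⟩ hqK
      obtain ⟨i, hi⟩ := (hKmem _).mp hqK
      rw [AxSquare.mem_toSet_iff] at hi
      obtain ⟨⟨hx1, hx2⟩, hy1, hy2⟩ := hi
      exact hpK ((hKmem p).mpr ⟨i, (AxSquare.mem_toSet_iff _ _).mpr
        ⟨⟨hcon i ⟨hy1, hy2⟩, le_trans ht hx2⟩, hy1, hy2⟩⟩)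
  have hleft : ∃ i : Fin 4, ((S i).y ≤ p.2 ∧ p.2 ≤ (S i).y + (S i).side) ∧
      (S i).x + (S i).side < p.1 := by
    by_contra hcon
    push_neg at hcon
    refine not_bounded_ray_left p.2 p.1 (hbd.subset ?_)
    refine IsPreconnected.subset_connectedComponentIn ?_ ⟨p.1, self_mem_Iic, Prod.mk.eta⟩ ?_
    · exact isPreconnected_Iic.image _ (Continuous.continuousOn (by continuity))
    · rintro q ⟨t, ht, rfl⟩ hqK
      obtain ⟨i, hi⟩ := (hKmem _).mp hqK
      rw [AxSquare.mem_toSet_iff] at hi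
      obtain ⟨⟨hx1, hx2⟩, hy1, hy2⟩ := hi
      exact hpK ((hKmem p).mpr ⟨i, (AxSquare.mem_toSet_iff _ _).mpr
        ⟨⟨le_trans hx1 ht, hcon i ⟨hy1, hy2⟩⟩, hy1, hy2⟩⟩)
  obtain ⟨u, ⟨hux1, hux2⟩, huy⟩ := hup
  obtain ⟨d, ⟨hdx1, hdx2⟩, hdy⟩ := hdown
  obtain ⟨r, ⟨hry1, hry2⟩, hrx⟩ := hright
  obtain ⟨l, ⟨hly1, hly2⟩, hlx⟩ := hleft
  -- distinctness
  have hud : u ≠ d := by rintro rfl; linarith [(S u).side_pos]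
  have hlr : l ≠ r := by rintro rfl; linarith [(S l).side_pos]
  have hul : u ≠ l := by rintro rfl; linarith
  have hur : u ≠ r := by rintro rfl; linarith
  have hdl : d ≠ l := by rintro rfl; linarith
  have hdr : d ≠ r := by rintro rfl; linarith
  -- u,d are not cyclically adjacent
  have hnadj : ¬ Adj4 u d := by
    intro hA
    obtain ⟨z, hzu, hzd⟩ := hadj_ne u d hA
    rw [AxSquare.mem_toSet_iff] at hzu hzd
    linarith [hzu.2.1, hzd.2.2]
  obtain ⟨hAul, hAur, hAdl, hAdr, hcover⟩ := fin4_lemma u d l r hud hlr hul hur hdl hdr hnadj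
  -- contact points
  obtain ⟨zul, hzul_u, hzul_l⟩ := hadj_ne u l hAul
  obtain ⟨zur, hzur_u, hzur_r⟩ := hadj_ne u r hAur
  obtain ⟨zdl, hzdl_d, hzdl_l⟩ := hadj_ne d l hAdl
  obtain ⟨zdr, hzdr_d, hzdr_r⟩ := hadj_ne d r hAdr
  rw [AxSquare.mem_toSet_iff] at hzul_u hzul_l hzur_u hzur_r hzdl_d hzdl_l hzdr_d hzdr_r
  set a : ℝ := (S l).x + (S l).side with ha_def
  set b : ℝ := (S r).x with hb_def
  set c : ℝ := (S d).y + (S d).side with hc_def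
  set e : ℝ := (S u).y with he_def
  have hab : a < b := by linarith
  have hce : c < e := by linarith
  have hlyc : (S l).y ≤ c := by linarith [hzdl_l.2.1, hzdl_d.2.2]
  have hlye : e ≤ (S l).y + (S l).side := by linarith [hzul_u.2.1, hzul_l.2.2]
  have hryc : (S r).y ≤ c := by linarith [hzdr_r.2.1, hzdr_d.2.2]
  have hrye : e ≤ (S r).y + (S r).side := by linarith [hzur_u.2.1, hzur_r.2.2]
  have hdxa : (S d).x ≤ a := by linarith [hzdl_d.1.1, hzdl_l.1.2]
  have hdxb : b ≤ (S d).x + (S d).side := by linarith [hzdr_r.1.1, hzdr_d.1.2]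
  have huxa : (S u).x ≤ a := by linarith [hzul_u.1.1, hzul_l.1.2]
  have huxb : b ≤ (S u).x + (S u).side := by linarith [hzur_r.1.1, hzur_u.1.2]
  set R : Set (ℝ × ℝ) := Ioo a b ×ˢ Ioo c e with hR_def
  have hpR : p ∈ R := Set.mem_prod.mpr ⟨⟨hlx, hrx⟩, hdy, huy⟩
  have hRW : R ⊆ Kᶜ := by
    intro q hq hqK
    obtain ⟨⟨hq1, hq2⟩, hq3, hq4⟩ := Set.mem_prod.mp hq
    obtain ⟨i, hi⟩ := (hKmem q).mp hqK
    rw [AxSquare.mem_toSet_iff] at hi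
    rcases hcover i with rfl | rfl | rfl | rfl
    · linarith [hi.2.1]
    · linarith [hi.2.2]
    · linarith [hi.1.2]
    · linarith [hi.1.1]
  have hclosure : closure R = Icc a b ×ˢ Icc c e := by
    rw [hR_def, closure_prod_eq, closure_Ioo hab.ne, closure_Ioo hce.ne]
  have hbdry : closure R ∩ Kᶜ ⊆ R := by
    rintro q ⟨hqc, hqK⟩
    rw [hclosure] at hqc
    obtain ⟨⟨hq1a, hq1b⟩, hq2c, hq2e⟩ := Set.mem_prod.mp hqc
    by_contra hqR
    have hcases : q.1 = a ∨ q.1 = b ∨ q.2 = c ∨ q.2 = e := by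
      by_contra hno
      push_neg at hno
      exact hqR (Set.mem_prod.mpr ⟨⟨lt_of_le_of_ne hq1a (Ne.symm hno.1),
        lt_of_le_of_ne hq1b hno.2.1⟩,
        lt_of_le_of_ne hq2c (Ne.symm hno.2.2.1), lt_of_le_of_ne hq2e hno.2.2.2⟩)
    rcases hcases with h | h | h | h
    · exact hqK ((hKmem q).mpr ⟨l, (AxSquare.mem_toSet_iff _ _).mpr
        ⟨⟨by linarith [(S l).side_pos], by linarith⟩, by linarith, by linarith⟩⟩)
    · exact hqK ((hKmem q).mpr ⟨r, (AxSquare.mem_toSet_iff _ _).mpr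
        ⟨⟨by linarith, by linarith [(S r).side_pos]⟩, by linarith, by linarith⟩⟩)
    · exact hqK ((hKmem q).mpr ⟨d, (AxSquare.mem_toSet_iff _ _).mpr
        ⟨⟨by linarith, by linarith⟩, by linarith [(S d).side_pos], by linarith⟩⟩)
    · exact hqK ((hKmem q).mpr ⟨u, (AxSquare.mem_toSet_iff _ _).mpr
        ⟨⟨by linarith, by linarith⟩, by linarith, by linarith [(S u).side_pos]⟩⟩)
  have hRsubC : R ⊆ connectedComponentIn Kᶜ p :=
    ((convex_Ioo a b).prod (convex_Ioo c e)).isPreconnected.subset_connectedComponentIn hpR hRW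
  have hCsubR : connectedComponentIn Kᶜ p ⊆ R := by
    refine (isPreconnected_connectedComponentIn).subset_left_of_subset_union
      (isOpen_Ioo.prod isOpen_Ioo) isClosed_closure.isOpen_compl
      (disjoint_compl_right.mono_left subset_closure) ?_
      ⟨p, mem_connectedComponentIn hp, hpR⟩
    intro q hq
    by_cases hqc : q ∈ closure R
    · exact Or.inl (hbdry ⟨hqc, connectedComponentIn_subset _ _ hq⟩)
    · exact Or.inr hqc
  exact ⟨a, b, c, e, hab, hce, subset_antisymm hCsubR hRsubC⟩
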